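/- arXiv:1904.03960 — 5 statements merged into one kernel-verified Lean document; each statement's English description precedes it below -/
import Mathlib

section
/- For every complex number z with Re(z) < 1 and every real u ≥ 0, one has |(1+u)^(z-1) - 1| ≤ u·|z-1|. -/
/-- For every complex `z` with `Re z < 1` and real `u ≥ 0`,
`|(1+u)^(z-1) - 1| ≤ u * |z-1|` (principal branch). -/
theorem stmt_0 (z : ℂ) (hz : z.re < 1) (u : ℝ) (hu : 0 ≤ u) :
    ‖(((1 + u : ℝ)) : ℂ) ^ (z - 1) - 1‖ ≤ u * ‖z - 1‖ := by
  set f : ℝ → ℂ := fun t => (((1 + t : ℝ)) : ℂ) ^ (z - 1) with hf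
  set f' : ℝ → ℂ := fun t => (z - 1) * (((1 + t : ℝ)) : ℂ) ^ (z - 2) with hf'
  have hderiv : ∀ t ∈ Set.Icc (0:ℝ) u, HasDerivWithinAt f (f' t) (Set.Icc 0 u) t := by
    intro t ht
    have h1 : (0:ℝ) < 1 + t := by linarith [ht.1]
    have h0 : ((1 + (t:ℂ))) ∈ Complex.slitPlane := by
      have := Complex.ofReal_mem_slitPlane.mpr h1
      simpa using this
    have hd : HasDerivAt (fun w : ℂ => (1 + w) ^ (z - 1))
        ((z - 1) * (1 + (t:ℂ)) ^ (z - 1 - 1) * 1) (t:ℂ) :=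
      ((hasDerivAt_id (t:ℂ)).const_add 1).cpow_const h0
    have hd2 := hd.comp_ofReal
    have h2 : z - 1 - 1 = z - 2 := by ring
    simp only [mul_one, h2] at hd2
    have heq : (fun y : ℝ => (1 + (y:ℂ)) ^ (z - 1)) = f := by
      funext y; simp [hf]
    rw [heq] at hd2
    have : f' t = (z - 1) * (1 + (t:ℂ)) ^ (z - 2) := by simp [hf']
    rw [this]
    exact hd2.hasDerivWithinAt
  have hbound : ∀ t ∈ Set.Icc (0:ℝ) u, ‖f' t‖ ≤ ‖z - 1‖ := by
    intro t ht
    have h1 : (0:ℝ) < 1 + t := by linarith [ht.1]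
    have habs : ‖(((1 + t : ℝ)) : ℂ) ^ (z - 2)‖ = (1 + t) ^ ((z:ℂ) - 2).re :=
      Complex.norm_cpow_eq_rpow_re_of_pos h1 _
    have hle : (1 + t) ^ ((z:ℂ) - 2).re ≤ 1 := by
      apply Real.rpow_le_one_of_one_le_of_nonpos (by linarith [ht.1])
      simp only [Complex.sub_re]
      norm_num
      linarith
    calc ‖f' t‖ = ‖z - 1‖ * ‖(((1 + t : ℝ)) : ℂ) ^ (z - 2)‖ := by
          simp [hf', map_mul]
      _ ≤ ‖z - 1‖ * 1 := by
          rw [habs]; exact mul_le_mul_of_nonneg_left hle (norm_nonneg _)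
      _ = ‖z - 1‖ := mul_one _
  have key := norm_image_sub_le_of_norm_deriv_le_segment' hderiv
    (fun x hx => hbound x (Set.Ico_subset_Icc_self hx)) u (Set.right_mem_Icc.mpr hu)
  have hf0 : f 0 = 1 := by simp [hf]
  rw [hf0] at key
  simpa [hf, mul_comm] using key
end

section
/- Define the Cesàro operator C on functions f : (0,1) → ℂ by (Cf)(x) = (1/x) ∫₀ˣ f(s) ds. Then for every n ≥ 1 and every f ∈ L^p(0,1) with 1 < p < ∞, the n-th power of C is given by (Cⁿf)(x) = (1/(x·(n-1)!)) ∫₀ˣ (log(x/t))^(n-1) f(t) dt for almost every x ∈ (0,1). -/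
open MeasureTheory Set Real
open scoped ENNReal

lemma aux_log_rpow_le {r u : ℝ} (hr : 0 < r) (hu : 1 ≤ u) :
    Real.log u ^ r ≤ (2 * r) ^ r * u ^ (2⁻¹ : ℝ) := by
  have hu0 : (0:ℝ) < u := by linarith
  have h1 : Real.log u = 2 * r * Real.log (u ^ (1 / (2 * r))) := by
    rw [Real.log_rpow hu0]; field_simp
  have h2 : Real.log (u ^ (1 / (2 * r))) ≤ u ^ (1 / (2 * r)) :=
    Real.log_le_self (Real.rpow_nonneg hu0.le _)
  have h3 : Real.log u ≤ 2 * r * u ^ (1 / (2 * r)) := by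
    rw [h1]; exact mul_le_mul_of_nonneg_left h2 (by positivity)
  calc Real.log u ^ r ≤ (2 * r * u ^ (1 / (2 * r))) ^ r :=
        Real.rpow_le_rpow (Real.log_nonneg hu) h3 hr.le
    _ = (2 * r) ^ r * u ^ (2⁻¹ : ℝ) := by
        rw [Real.mul_rpow (by positivity) (by positivity), ← Real.rpow_mul hu0.le]
        have he : 1 / (2*r) * r = (2⁻¹:ℝ) := by field_simp
        rw [he]

lemma aux_int_logpow {x r : ℝ} (hx : 0 < x) (hx1 : x ≤ 1) (hr : 0 ≤ r) :
    IntegrableOn (fun t => |Real.log (x / t)| ^ r) (Ioo (0:ℝ) x) volume := by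
  rcases eq_or_lt_of_le hr with h0 | hrpos
  · simp only [← h0, Real.rpow_zero]
    exact integrableOn_const (by simp [measure_Ioo_lt_top]) (by simp)
  have hmeas : Measurable fun t : ℝ => |Real.log (x / t)| ^ r :=
    ((Real.measurable_log.comp (measurable_const.div measurable_id)).abs).pow_const r
  have hdom : IntegrableOn (fun t : ℝ => (2 * r) ^ r * t ^ (-(2⁻¹:ℝ))) (Ioo (0:ℝ) x) volume := by
    have := (intervalIntegral.intervalIntegrable_rpow' (a := 0) (b := x) (r := -(2⁻¹:ℝ)) (by norm_num))
    rw [intervalIntegrable_iff_integrableOn_Ioo_of_le hx.le] at this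
    exact this.const_mul _
  refine hdom.integrable.mono hmeas.aestronglyMeasurable ?_
  refine (ae_restrict_iff' measurableSet_Ioo).2 (Filter.Eventually.of_forall ?_)
  intro t ht
  have ht0 : 0 < t := ht.1
  have htx : t < x := ht.2
  have h1 : (1:ℝ) ≤ x / t := (one_le_div ht0).2 htx.le
  have h2 : x / t ≤ t⁻¹ := by
    rw [div_le_iff₀ ht0, inv_mul_cancel₀ ht0.ne']
    exact hx1
  have h3 : (1:ℝ) ≤ t⁻¹ := le_trans h1 h2
  have key : |Real.log (x / t)| ^ r ≤ (2 * r) ^ r * t ^ (-(2⁻¹:ℝ)) := by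
    have e1 : |Real.log (x / t)| = Real.log (x / t) := abs_of_nonneg (Real.log_nonneg h1)
    have e2 : Real.log (x / t) ≤ Real.log t⁻¹ := Real.log_le_log (by positivity) h2
    calc |Real.log (x / t)| ^ r ≤ Real.log t⁻¹ ^ r := by
          rw [e1]; exact Real.rpow_le_rpow (Real.log_nonneg h1) e2 hr
      _ ≤ (2 * r) ^ r * (t⁻¹) ^ (2⁻¹:ℝ) := aux_log_rpow_le hrpos h3
      _ = (2 * r) ^ r * t ^ (-(2⁻¹:ℝ)) := by
          rw [Real.inv_rpow ht0.le, ← Real.rpow_neg ht0.le]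
  have : ‖|Real.log (x / t)| ^ r‖ = |Real.log (x / t)| ^ r := by
    rw [Real.norm_eq_abs, abs_of_nonneg (Real.rpow_nonneg (abs_nonneg _) r)]
  rw [this]
  calc |Real.log (x / t)| ^ r ≤ (2 * r) ^ r * t ^ (-(2⁻¹:ℝ)) := key
    _ ≤ ‖(2 * r) ^ r * t ^ (-(2⁻¹:ℝ))‖ := le_abs_self _

lemma aux_memLp_log {p x : ℝ} (hp : 1 < p) (hx : 0 < x) (hx1 : x ≤ 1) (k : ℕ) :
    MemLp (fun t => Real.log (x / t) ^ k) (ENNReal.ofReal (p / (p - 1)))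
      (volume.restrict (Ioo (0:ℝ) x)) := by
  set s : ℝ := p / (p - 1) with hs
  have hs0 : 0 < s := div_pos (by linarith) (by linarith)
  set q : ℝ≥0∞ := ENNReal.ofReal s with hq
  have hq0 : q ≠ 0 := by simp [hq, ENNReal.ofReal_eq_zero, not_le, hs0]
  have hqt : q ≠ ∞ := ENNReal.ofReal_ne_top
  have hqr : q.toReal = s := ENNReal.toReal_ofReal hs0.le
  have hφm : Measurable fun t : ℝ => Real.log (x / t) ^ k :=
    (Real.measurable_log.comp (measurable_const.div measurable_id)).pow_const k
  rw [← memLp_norm_rpow_iff (p := q) hφm.aestronglyMeasurable hq0 hqt,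
    ENNReal.div_self hq0 hqt, memLp_one_iff_integrable]
  have : (fun t : ℝ => ‖Real.log (x / t) ^ k‖ ^ q.toReal)
      = fun t : ℝ => |Real.log (x / t)| ^ ((k : ℝ) * s) := by
    funext t
    rw [hqr, Real.norm_eq_abs, abs_pow, ← Real.rpow_natCast |Real.log (x/t)| k,
      ← Real.rpow_mul (abs_nonneg _)]
  rw [this]
  exact aux_int_logpow hx hx1 (by positivity)

lemma aux_holder {p x : ℝ} (hp : 1 < p) (hx : 0 < x) (hx1 : x ≤ 1) {g : ℝ → ℂ}
    (hg : MemLp g (ENNReal.ofReal p) (volume.restrict (Ioo (0:ℝ) x))) (k : ℕ) :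
    IntegrableOn (fun t => ((Real.log (x / t) ^ k : ℝ) : ℂ) * g t) (Ioo (0:ℝ) x) volume := by
  have hp0 : (0:ℝ) < p := by linarith
  have hs0 : (0:ℝ) < p / (p - 1) := div_pos (by linarith) (by linarith)
  have h111 : (1:ℝ≥0∞) / 1 = 1 / ENNReal.ofReal (p / (p - 1)) + 1 / ENNReal.ofReal p := by
    rw [one_div, one_div, one_div, ← ENNReal.ofReal_inv_of_pos hs0,
      ← ENNReal.ofReal_inv_of_pos hp0, ← ENNReal.ofReal_add (by positivity) (by positivity),
      inv_one]
    rw [show (p / (p - 1))⁻¹ + p⁻¹ = 1 by field_simp; ring]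
    simp
  have := hg.smul (r := 1) (aux_memLp_log hp hx hx1 k)
    (hpqr := ⟨by simpa only [one_div, inv_one, eq_comm] using h111⟩)
  rw [memLp_one_iff_integrable] at this
  have he : (fun t => Real.log (x / t) ^ k • g t)
      = fun t => ((Real.log (x / t) ^ k : ℝ) : ℂ) * g t := by
    funext t; rw [Complex.real_smul]
  rwa [Pi.smul_def', he] at this

lemma aux_ftc {t x : ℝ} (ht : 0 < t) (htx : t ≤ x) (n : ℕ) :
    ∫ y in Ioo t x, y⁻¹ * Real.log (y / t) ^ n
      = Real.log (x / t) ^ (n + 1) / (n + 1) := by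
  have hne : ∀ y ∈ Set.uIcc t x, y ≠ 0 := by
    rw [Set.uIcc_of_le htx]
    intro y hy; exact (lt_of_lt_of_le ht hy.1).ne'
  rw [← integral_Ioc_eq_integral_Ioo, ← intervalIntegral.integral_of_le htx]
  have hcong : Set.EqOn (fun y : ℝ => y⁻¹ * Real.log (y / t) ^ n)
      (fun y : ℝ => y⁻¹ * (Real.log y - Real.log t) ^ n) (Set.uIcc t x) := by
    intro y hy
    simp only [Real.log_div (hne y hy) ht.ne']
  rw [intervalIntegral.integral_congr hcong]
  have hderiv : ∀ y ∈ Set.uIcc t x,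
      HasDerivAt (fun y : ℝ => (Real.log y - Real.log t) ^ (n + 1) / (n + 1))
        (y⁻¹ * (Real.log y - Real.log t) ^ n) y := by
    intro y hy
    have h1 : HasDerivAt (fun y : ℝ => Real.log y - Real.log t) y⁻¹ y :=
      (Real.hasDerivAt_log (hne y hy)).sub_const _
    have h2 := (h1.pow (n + 1)).div_const ((n : ℝ) + 1)
    refine h2.congr_deriv ?_
    have hy0 : y ≠ 0 := hne y hy
    have hn0 : ((n:ℝ) + 1) ≠ 0 := by positivity
    rw [Nat.add_sub_cancel, Nat.cast_add, Nat.cast_one]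
    field_simp
  have hint : IntervalIntegrable (fun y : ℝ => y⁻¹ * (Real.log y - Real.log t) ^ n)
      volume t x := by
    apply ContinuousOn.intervalIntegrable
    exact (continuousOn_id.inv₀ hne).mul
      (((Real.continuousOn_log.mono (fun y hy => hne y hy)).sub continuousOn_const).pow n)
  rw [intervalIntegral.integral_eq_sub_of_hasDerivAt hderiv hint]
  rw [Real.log_div (lt_of_lt_of_le ht htx).ne' ht.ne', sub_self,
    zero_pow (Nat.succ_ne_zero n), zero_div, sub_zero]

lemma boyd_main {p : ℝ} (hp : 1 < p) {g : ℝ → ℂ} (hgm : Measurable g)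
    (hg : MemLp g (ENNReal.ofReal p) (volume.restrict (Ioo (0:ℝ) 1))) :
    ∀ n : ℕ, ∀ x : ℝ, 0 < x → x < 1 →
      ((fun h : ℝ → ℂ => fun y : ℝ => ((y : ℂ))⁻¹ * ∫ s in (0:ℝ)..y, h s)^[n + 1] g) x
        = ((x : ℂ) * ((n.factorial : ℕ) : ℂ))⁻¹
            * ∫ t in Ioo (0:ℝ) x, ((Real.log (x / t) ^ n : ℝ) : ℂ) * g t := by
  have hgx : ∀ {x : ℝ}, 0 < x → x ≤ 1 →
      MemLp g (ENNReal.ofReal p) (volume.restrict (Ioo (0:ℝ) x)) := by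
    intro x hx hx1
    exact hg.mono_measure (Measure.restrict_mono (Set.Ioo_subset_Ioo le_rfl hx1) le_rfl)
  intro n
  induction n with
  | zero =>
    intro x hx hx1
    have hit : ((fun h : ℝ → ℂ => fun y : ℝ => ((y : ℂ))⁻¹ * ∫ s in (0:ℝ)..y, h s)^[0 + 1] g) x
        = ((x : ℂ))⁻¹ * ∫ s in (0:ℝ)..x, g s := rfl
    rw [hit, intervalIntegral.integral_of_le hx.le, integral_Ioc_eq_integral_Ioo]
    simp
  | succ n ih =>
    intro x hx hx1
    have hit : ((fun h : ℝ → ℂ => fun y : ℝ => ((y : ℂ))⁻¹ * ∫ s in (0:ℝ)..y, h s)^[n + 1 + 1] g) x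
        = ((x : ℂ))⁻¹ * ∫ s in (0:ℝ)..x,
            ((fun h : ℝ → ℂ => fun y : ℝ => ((y : ℂ))⁻¹ * ∫ s in (0:ℝ)..y, h s)^[n + 1] g) s := by
      rw [Function.iterate_succ_apply']
    rw [hit]
    -- rewrite the outer integral using the induction hypothesis
    have e1 : (∫ s in (0:ℝ)..x,
        ((fun h : ℝ → ℂ => fun y : ℝ => ((y : ℂ))⁻¹ * ∫ s in (0:ℝ)..y, h s)^[n + 1] g) s)
        = ∫ y in Ioo (0:ℝ) x, ((y : ℂ) * ((n.factorial : ℕ) : ℂ))⁻¹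
            * ∫ t in Ioo (0:ℝ) y, ((Real.log (y / t) ^ n : ℝ) : ℂ) * g t := by
      rw [intervalIntegral.integral_of_le hx.le, integral_Ioc_eq_integral_Ioo]
      exact setIntegral_congr_fun measurableSet_Ioo
        (fun y hy => ih y hy.1 (hy.2.trans hx1))
    rw [e1]
    -- set up the Fubini argument
    set S : Set (ℝ × ℝ) := {q | 0 < q.1 ∧ q.1 < q.2 ∧ q.2 < x} with hS
    set H : ℝ × ℝ → ℂ :=
      fun q => (((q.2)⁻¹ * Real.log (q.2 / q.1) ^ n : ℝ) : ℂ) * g q.1 with hH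
    set F : ℝ → ℝ → ℂ := fun t y => S.indicator H (t, y) with hF
    have hSm : MeasurableSet S :=
      (measurableSet_lt measurable_const measurable_fst).inter
        ((measurableSet_lt measurable_fst measurable_snd).inter
          (measurableSet_lt measurable_snd measurable_const))
    have hHm : Measurable H :=
      (Complex.measurable_ofReal.comp
        (measurable_snd.inv.mul
          ((Real.measurable_log.comp (measurable_snd.div measurable_fst)).pow_const n))).mul
        (hgm.comp measurable_fst)
    have hFm : AEStronglyMeasurable (Function.uncurry F) (volume.prod volume) := by
      have : Function.uncurry F = S.indicator H := by funext q; rfl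
      rw [this]
      exact (hHm.indicator hSm).aestronglyMeasurable
    -- description of the slices in t
    have hFt : ∀ t : ℝ, 0 < t → t < x → F t
        = (Ioo t x).indicator
            (fun y => (((y)⁻¹ * Real.log (y / t) ^ n : ℝ) : ℂ) * g t) := by
      intro t ht htx
      funext y
      by_cases hy : y ∈ Ioo t x
      · have hmem : (t, y) ∈ S := ⟨ht, hy.1, hy.2⟩
        rw [hF]
        simp only [Set.indicator_of_mem hmem, Set.indicator_of_mem hy, hH]
      · have hmem : (t, y) ∉ S := fun hc => hy ⟨hc.2.1, hc.2.2⟩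
        rw [hF]
        simp only [Set.indicator_of_notMem hmem, Set.indicator_of_notMem hy]
    have hFt0 : ∀ t : ℝ, ¬ (0 < t ∧ t < x) → F t = fun _ => 0 := by
      intro t ht
      funext y
      rw [hF]
      refine Set.indicator_of_notMem (fun hc => ht ⟨hc.1, lt_trans hc.2.1 hc.2.2⟩) _
    -- integrability of each slice
    have hslice : ∀ t : ℝ, Integrable (F t) volume := by
      intro t
      by_cases htm : 0 < t ∧ t < x
      · rw [hFt t htm.1 htm.2]
        rw [integrable_indicator_iff measurableSet_Ioo]
        have h0 : ∀ y ∈ Icc t x, y ≠ 0 := fun y hy => (lt_of_lt_of_le htm.1 hy.1).ne'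
        have hc : ContinuousOn
            (fun y : ℝ => (((y)⁻¹ * Real.log (y / t) ^ n : ℝ) : ℂ)) (Icc t x) := by
          apply Complex.continuous_ofReal.comp_continuousOn
          exact (continuousOn_id.inv₀ h0).mul
            ((Real.continuousOn_log.comp (continuousOn_id.div_const t)
              (fun y hy => div_ne_zero (h0 y hy) htm.1.ne')).pow n)
        exact ((hc.integrableOn_Icc.mono_set Ioo_subset_Icc_self).mul_const (g t))
      · rw [hFt0 t htm]
        exact integrable_zero _ _ _
    -- value of the norm-integral in y, for t in (0, x)
    have hnorm : ∀ t ∈ Ioo (0:ℝ) x, (∫ y, ‖F t y‖)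
        = Real.log (x / t) ^ (n + 1) / (n + 1) * ‖g t‖ := by
      intro t ht
      have heq : (fun y => ‖F t y‖)
          = (Ioo t x).indicator
              (fun y => ((y)⁻¹ * Real.log (y / t) ^ n) * ‖g t‖) := by
        funext y
        rw [hFt t ht.1 ht.2]
        by_cases hy : y ∈ Ioo t x
        · rw [Set.indicator_of_mem hy, Set.indicator_of_mem hy, norm_mul,
            Complex.norm_real, Real.norm_eq_abs, abs_of_nonneg]
          have hy0 : (0:ℝ) < y := lt_trans ht.1 hy.1
          have hlog : 0 ≤ Real.log (y / t) :=
            Real.log_nonneg ((one_le_div ht.1).2 hy.1.le)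
          positivity
        · rw [Set.indicator_of_notMem hy, Set.indicator_of_notMem hy, norm_zero]
      rw [heq, integral_indicator measurableSet_Ioo, integral_mul_const,
        aux_ftc ht.1 ht.2.le n]
    -- the function t ↦ ∫ ‖F t y‖ dy is integrable
    have hnormint : Integrable (fun t => ∫ y, ‖F t y‖) volume := by
      have heq : (fun t => ∫ y, ‖F t y‖)
          = (Ioo (0:ℝ) x).indicator
              (fun t => Real.log (x / t) ^ (n + 1) / (n + 1) * ‖g t‖) := by
        funext t
        by_cases htm : t ∈ Ioo (0:ℝ) x
        · rw [Set.indicator_of_mem htm]; exact hnorm t htm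
        · rw [Set.indicator_of_notMem htm, hFt0 t (fun hc => htm ⟨hc.1, hc.2⟩)]
          simp
      rw [heq, integrable_indicator_iff measurableSet_Ioo]
      have h1 := ((aux_holder hp hx hx1.le (hgx hx hx1.le) (n + 1)).norm).div_const
        ((n : ℝ) + 1)
      refine IntegrableOn.congr_fun h1 (fun t ht => ?_) measurableSet_Ioo
      have hlog : 0 ≤ Real.log (x / t) := Real.log_nonneg ((one_le_div ht.1).2 ht.2.le)
      rw [norm_mul, Complex.norm_real, Real.norm_eq_abs, abs_of_nonneg (by positivity)]
      ring
    -- product integrability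
    have hInt : Integrable (Function.uncurry F) (volume.prod volume) := by
      rw [integrable_prod_iff hFm]
      exact ⟨Filter.Eventually.of_forall hslice, hnormint⟩
    -- the two iterated integrals
    have hYint : (fun y => ∫ t, F t y)
        = (Ioo (0:ℝ) x).indicator
            (fun y => ((y : ℂ))⁻¹
              * ∫ t in Ioo (0:ℝ) y, ((Real.log (y / t) ^ n : ℝ) : ℂ) * g t) := by
      funext y
      by_cases hy : y ∈ Ioo (0:ℝ) x
      · rw [Set.indicator_of_mem hy]
        have hsec : (fun t => F t y)
            = (Ioo (0:ℝ) y).indicator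
                (fun t => (((y)⁻¹ * Real.log (y / t) ^ n : ℝ) : ℂ) * g t) := by
          funext t
          by_cases htm : t ∈ Ioo (0:ℝ) y
          · have hmem : (t, y) ∈ S := ⟨htm.1, htm.2, hy.2⟩
            rw [hF]
            simp only [Set.indicator_of_mem hmem, Set.indicator_of_mem htm, hH]
          · have hmem : (t, y) ∉ S := fun hc => htm ⟨hc.1, hc.2.1⟩
            rw [hF]
            simp only [Set.indicator_of_notMem hmem, Set.indicator_of_notMem htm]
        rw [hsec, integral_indicator measurableSet_Ioo]
        rw [show (fun t => (((y)⁻¹ * Real.log (y / t) ^ n : ℝ) : ℂ) * g t)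
            = fun t => ((y : ℂ))⁻¹ * (((Real.log (y / t) ^ n : ℝ) : ℂ) * g t) by
          funext t; push_cast; ring]
        exact integral_const_mul _ _
      · rw [Set.indicator_of_notMem hy]
        have hsec : (fun t => F t y) = fun _ => 0 := by
          funext t
          rw [hF]
          exact Set.indicator_of_notMem
            (fun hc => hy ⟨lt_trans hc.1 hc.2.1, hc.2.2⟩) _
        rw [hsec, integral_zero]
    have hXint : (fun t => ∫ y, F t y)
        = (Ioo (0:ℝ) x).indicator
            (fun t => ((Real.log (x / t) ^ (n + 1) / (n + 1) : ℝ) : ℂ) * g t) := by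
      funext t
      by_cases htm : t ∈ Ioo (0:ℝ) x
      · rw [Set.indicator_of_mem htm, hFt t htm.1 htm.2,
          integral_indicator measurableSet_Ioo]
        have hval : (∫ (a : ℝ) in Ioo t x, ((a⁻¹ * Real.log (a / t) ^ n : ℝ) : ℂ))
            = (((∫ (a : ℝ) in Ioo t x, a⁻¹ * Real.log (a / t) ^ n) : ℝ) : ℂ) :=
          integral_ofReal
        rw [integral_mul_const, hval, aux_ftc htm.1 htm.2.le n]
      · rw [Set.indicator_of_notMem htm, hFt0 t (fun hc => htm ⟨hc.1, hc.2⟩)]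
        simp
    have hswap := integral_integral_swap hInt
    rw [hXint, hYint] at hswap
    rw [integral_indicator measurableSet_Ioo, integral_indicator measurableSet_Ioo] at hswap
    -- now put everything together
    have e2 : ∫ y in Ioo (0:ℝ) x, ((y : ℂ) * ((n.factorial : ℕ) : ℂ))⁻¹
            * ∫ t in Ioo (0:ℝ) y, ((Real.log (y / t) ^ n : ℝ) : ℂ) * g t
        = (((n.factorial : ℕ) : ℂ))⁻¹
            * ∫ y in Ioo (0:ℝ) x, ((y : ℂ))⁻¹
              * ∫ t in Ioo (0:ℝ) y, ((Real.log (y / t) ^ n : ℝ) : ℂ) * g t := by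
      rw [← integral_const_mul]
      refine setIntegral_congr_fun measurableSet_Ioo (fun y hy => ?_)
      rw [mul_inv]
      ring
    rw [e2, ← hswap]
    have e3 : ∫ t in Ioo (0:ℝ) x, ((Real.log (x / t) ^ (n + 1) / (n + 1) : ℝ) : ℂ) * g t
        = (((n:ℂ)) + 1)⁻¹
            * ∫ t in Ioo (0:ℝ) x, ((Real.log (x / t) ^ (n + 1) : ℝ) : ℂ) * g t := by
      rw [← integral_const_mul]
      refine setIntegral_congr_fun measurableSet_Ioo (fun t ht => ?_)
      push_cast
      ring
    rw [e3, Nat.factorial_succ, Nat.cast_mul, Nat.cast_add, Nat.cast_one,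
      mul_inv, mul_inv]
    ring

lemma boyd_transfer (f g : ℝ → ℂ)
    (hfg : f =ᵐ[volume.restrict (Ioo (0:ℝ) 1)] g) :
    ∀ n : ℕ, ∀ x ∈ Ioo (0:ℝ) 1,
      ((fun h : ℝ → ℂ => fun y : ℝ => ((y : ℂ))⁻¹ * ∫ s in (0:ℝ)..y, h s)^[n + 1] f) x
        = ((fun h : ℝ → ℂ => fun y : ℝ => ((y : ℂ))⁻¹ * ∫ s in (0:ℝ)..y, h s)^[n + 1] g) x := by
  intro n
  induction n with
  | zero =>
    intro x hx
    have h1 : ((fun h : ℝ → ℂ => fun y : ℝ => ((y : ℂ))⁻¹ * ∫ s in (0:ℝ)..y, h s)^[0 + 1] f) x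
        = ((x : ℂ))⁻¹ * ∫ s in (0:ℝ)..x, f s := rfl
    have h2 : ((fun h : ℝ → ℂ => fun y : ℝ => ((y : ℂ))⁻¹ * ∫ s in (0:ℝ)..y, h s)^[0 + 1] g) x
        = ((x : ℂ))⁻¹ * ∫ s in (0:ℝ)..x, g s := rfl
    rw [h1, h2, intervalIntegral.integral_of_le hx.1.le,
      intervalIntegral.integral_of_le hx.1.le]
    congr 1
    refine integral_congr_ae ?_
    exact ae_restrict_of_ae_restrict_of_subset (by intro s hs; exact ⟨hs.1, lt_of_le_of_lt hs.2 hx.2⟩) hfg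
  | succ n ih =>
    intro x hx
    have h1 : ∀ u : ℝ → ℂ,
        ((fun h : ℝ → ℂ => fun y : ℝ => ((y : ℂ))⁻¹ * ∫ s in (0:ℝ)..y, h s)^[n + 1 + 1] u) x
        = ((x : ℂ))⁻¹ * ∫ s in (0:ℝ)..x,
            ((fun h : ℝ → ℂ => fun y : ℝ => ((y : ℂ))⁻¹ * ∫ s in (0:ℝ)..y, h s)^[n + 1] u) s := by
      intro u
      rw [Function.iterate_succ_apply']
    rw [h1 f, h1 g]
    congr 1
    rw [intervalIntegral.integral_of_le hx.1.le, intervalIntegral.integral_of_le hx.1.le]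
    refine setIntegral_congr_fun measurableSet_Ioc (fun s hs => ?_)
    exact ih s ⟨hs.1, lt_of_le_of_lt hs.2 hx.2⟩

/-- Boyd's formula for the integer powers of the Cesàro operator on `L^p(0,1)`, `1 < p < ∞`. -/
theorem stmt_8 (p : ℝ) (hp : 1 < p) (f : ℝ → ℂ)
    (hf : MeasureTheory.MemLp f (ENNReal.ofReal p)
      (MeasureTheory.volume.restrict (Set.Ioo (0 : ℝ) 1)))
    (n : ℕ) (hn : 1 ≤ n) :
    ∀ᵐ x ∂(MeasureTheory.volume.restrict (Set.Ioo (0 : ℝ) 1)),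
      ((fun g : ℝ → ℂ => fun y : ℝ => ((y : ℂ))⁻¹ * ∫ s in (0 : ℝ)..y, g s)^[n] f) x
        = (1 / ((x * ((n - 1).factorial : ℝ)) : ℂ)) *
            ∫ t in (0 : ℝ)..x, ((Real.log (x / t) ^ (n - 1) : ℝ) : ℂ) * f t := by
  obtain ⟨m, rfl⟩ : ∃ m : ℕ, n = m + 1 := ⟨n - 1, (Nat.succ_pred_eq_of_pos hn).symm⟩
  have hfm := hf.aestronglyMeasurable
  set g : ℝ → ℂ := hfm.mk f with hg
  have hgm : Measurable g := hfm.stronglyMeasurable_mk.measurable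
  have hfg : f =ᵐ[volume.restrict (Ioo (0:ℝ) 1)] g := hfm.ae_eq_mk
  have hgmem : MemLp g (ENNReal.ofReal p) (volume.restrict (Ioo (0:ℝ) 1)) := hf.ae_eq hfg
  refine (ae_restrict_iff' measurableSet_Ioo).2 (Filter.Eventually.of_forall ?_)
  intro x hx
  have hms : m + 1 - 1 = m := rfl
  rw [hms]
  rw [boyd_transfer f g hfg m x hx, boyd_main hp hgm hgmem m x hx.1 hx.2]
  have hconst : ((x : ℂ) * ((m.factorial : ℕ) : ℂ))⁻¹
      = ((x : ℂ) * (((m.factorial : ℕ) : ℝ) : ℂ))⁻¹ := by norm_cast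
  have hint2 : ∫ (t : ℝ) in Ioo (0:ℝ) x, ((Real.log (x / t) ^ m : ℝ) : ℂ) * g t
      = ∫ (t : ℝ) in Ioo (0:ℝ) x, ((Real.log (x / t) ^ m : ℝ) : ℂ) * f t := by
    refine integral_congr_ae ?_
    have hfg' : f =ᵐ[volume.restrict (Ioo (0:ℝ) x)] g :=
      ae_restrict_of_ae_restrict_of_subset (Ioo_subset_Ioo le_rfl hx.2.le) hfg
    filter_upwards [hfg'] with t ht
    rw [ht]
  rw [intervalIntegral.integral_of_le hx.1.le, integral_Ioc_eq_integral_Ioo, one_div,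
    hconst, hint2]
end

section
/- Let z ∈ ℂ with Re(z) > 0 and let f : [0,1] → ℂ be continuous with sup norm ‖f‖_∞. Then for every t ∈ [0,1], |(J(z)f)(t)| ≤ ‖f‖_∞ / (|Γ(z)| · Re(z)). Consequently the operator norm of J(z) on C[0,1] satisfies ‖J(z)‖ ≤ (1/|Γ(z+1)|) · |z|/Re(z). -/
/-- Sup-norm bound for the Riemann–Liouville operator on `C[0,1]`:
`|(J(z)f)(t)| ≤ ‖f‖_∞/(|Γ(z)| Re z)` and hence
`|(J(z)f)(t)| ≤ (1/|Γ(z+1)|)·(|z|/Re z)·‖f‖_∞`. -/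
theorem stmt_11 (z : ℂ) (hz : 0 < z.re) (f : ℝ → ℂ) (hf : ContinuousOn f (Set.Icc 0 1))
    (M : ℝ) (hM : ∀ s ∈ Set.Icc (0 : ℝ) 1, ‖f s‖ ≤ M)
    (J : ℂ → (ℝ → ℂ) → ℝ → ℂ)
    (hJ : J = fun γ g t =>
      (1 / Complex.Gamma γ) * ∫ s in (0 : ℝ)..t, (((t - s : ℝ)) : ℂ) ^ (γ - 1) * g s) :
    ∀ t ∈ Set.Icc (0 : ℝ) 1,
      ‖J z f t‖ ≤ M / (‖Complex.Gamma z‖ * z.re) ∧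
      ‖J z f t‖ ≤
        (1 / ‖Complex.Gamma (z + 1)‖) * (‖z‖ / z.re) * M := by
  intro t ht
  obtain ⟨ht0, ht1⟩ := ht
  have hM0 : 0 ≤ M := le_trans (norm_nonneg _) (hM 0 ⟨le_refl 0, zero_le_one⟩)
  have hz0 : z ≠ 0 := fun h => by simp [h] at hz
  have hΓ : Complex.Gamma z ≠ 0 := by
    apply Complex.Gamma_ne_zero
    intro m h
    have : z.re = -(m : ℝ) := by rw [h]; simp
    have : (0:ℝ) < -(m:ℝ) := this ▸ hz
    have : (m:ℝ) < 0 := by linarith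
    exact absurd this (not_lt.mpr (Nat.cast_nonneg m))
  -- bound on the integral
  have hbound : IntervalIntegrable (fun s => (t - s) ^ (z.re - 1) * M) MeasureTheory.volume 0 t := by
    have h1 : IntervalIntegrable (fun x : ℝ => x ^ (z.re - 1)) MeasureTheory.volume 0 t :=
      intervalIntegral.intervalIntegrable_rpow' (by linarith)
    have h2 := (h1.comp_sub_left t).symm
    simpa using h2.mul_const M
  have hkey : ‖∫ s in (0:ℝ)..t, (((t - s : ℝ)) : ℂ) ^ (z - 1) * f s‖ ≤ M / z.re := by
    have hle : ‖∫ s in (0:ℝ)..t, (((t - s : ℝ)) : ℂ) ^ (z - 1) * f s‖ ≤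
        |∫ s in (0:ℝ)..t, (t - s) ^ (z.re - 1) * M| := by
      apply intervalIntegral.norm_integral_le_abs_of_norm_le _ hbound
      have : Set.uIoc (0:ℝ) t ⊆ Set.Ioc 0 t := by
        rw [Set.uIoc_of_le ht0]
      filter_upwards [MeasureTheory.ae_restrict_mem measurableSet_uIoc] with s hs
      obtain ⟨hs0, hst⟩ := this hs
      have hsle : s ≤ 1 := le_trans hst ht1
      have hfb : ‖f s‖ ≤ M := hM s ⟨le_of_lt hs0, hsle⟩
      rw [norm_mul]
      rcases eq_or_lt_of_le hst with h | h
      · rcases eq_or_ne (z - 1) 0 with hz1 | hz1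
        · simp only [← h, sub_self, hz1, Complex.cpow_zero, norm_one, one_mul]
          have : z.re - 1 = 0 := by
            have := congrArg Complex.re hz1
            simpa using this
          simpa [this] using hfb
        · simp only [← h, sub_self, Complex.ofReal_zero, Complex.zero_cpow hz1, norm_zero,
            zero_mul]
          exact mul_nonneg (Real.rpow_nonneg le_rfl _) hM0
      · have hpos : 0 < t - s := by linarith
        rw [Complex.norm_cpow_eq_rpow_re_of_pos hpos]
        have : (z - 1).re = z.re - 1 := by simp
        rw [this]
        exact mul_le_mul_of_nonneg_left hfb (Real.rpow_nonneg (le_of_lt hpos) _)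
    have hval : ∫ s in (0:ℝ)..t, (t - s) ^ (z.re - 1) * M = t ^ z.re / z.re * M := by
      rw [intervalIntegral.integral_mul_const]
      rw [show ∫ s in (0:ℝ)..t, (t - s) ^ (z.re - 1) = ∫ s in (0:ℝ)..t, (fun x : ℝ => x ^ (z.re - 1)) (t - s) from rfl,
        intervalIntegral.integral_comp_sub_left (a := 0) (b := t) (fun x : ℝ => x ^ (z.re - 1)) t]
      simp only [sub_self, sub_zero]
      rw [integral_rpow (Or.inl (by linarith))]
      rw [sub_add_cancel, Real.zero_rpow (ne_of_gt hz)]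
      ring
    calc ‖∫ s in (0:ℝ)..t, (((t - s : ℝ)) : ℂ) ^ (z - 1) * f s‖
        ≤ |∫ s in (0:ℝ)..t, (t - s) ^ (z.re - 1) * M| := hle
      _ = t ^ z.re / z.re * M := by
          rw [hval, abs_of_nonneg]
          positivity
      _ ≤ 1 / z.re * M := by
          gcongr
          exact Real.rpow_le_one ht0 ht1 (le_of_lt hz)
      _ = M / z.re := by ring
  have h1 : ‖J z f t‖ ≤ M / (‖Complex.Gamma z‖ * z.re) := by
    rw [hJ]
    simp only
    rw [norm_mul, norm_div, norm_one]
    calc 1 / ‖Complex.Gamma z‖ *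
          ‖∫ s in (0:ℝ)..t, (((t - s : ℝ)) : ℂ) ^ (z - 1) * f s‖
        ≤ 1 / ‖Complex.Gamma z‖ * (M / z.re) := by
          gcongr
      _ = M / (‖Complex.Gamma z‖ * z.re) := by
          field_simp
  refine ⟨h1, ?_⟩
  have hΓ1 : ‖Complex.Gamma (z + 1)‖ = ‖z‖ * ‖Complex.Gamma z‖ := by
    rw [Complex.Gamma_add_one z hz0, norm_mul]
  have hzabs : ‖z‖ ≠ 0 := by simpa using hz0
  calc ‖J z f t‖ ≤ M / (‖Complex.Gamma z‖ * z.re) := h1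
    _ = (1 / ‖Complex.Gamma (z + 1)‖) * (‖z‖ / z.re) * M := by
        rw [hΓ1]
        field_simp
end

section
/- Let 0 < α < 1 and z ∈ ℂ with Re(z) > 0. For f : [0,1] → ℂ with f(0) = 0 and finite Hölder seminorm ‖f‖_α = sup_{t≠s} |f(t)-f(s)|/|t-s|^α, the function J(z)f satisfies ‖J(z)f‖_α ≤ (2/(|Γ(z)|·Re(z))) · ‖f‖_α. -/
open MeasureTheory Set intervalIntegral

private lemma holder_contOn {α K : ℝ} (hα0 : 0 < α) {f : ℝ → ℂ}
    (hK : ∀ t ∈ Set.Icc (0 : ℝ) 1, ∀ s ∈ Set.Icc (0 : ℝ) 1,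
      ‖f t - f s‖ ≤ K * |t - s| ^ α) (hK0 : 0 ≤ K) :
    ContinuousOn f (Set.Icc (0 : ℝ) 1) := by
  intro x hx
  rw [Metric.continuousWithinAt_iff]
  intro ε hε
  have hδ : (0:ℝ) < (ε / (K + 1)) ^ (1/α) :=
    Real.rpow_pos_of_pos (by positivity) _
  refine ⟨(ε / (K + 1)) ^ (1/α), hδ, ?_⟩
  intro y hy hyd
  have h1 : dist (f y) (f x) ≤ K * |y - x| ^ α := by
    rw [dist_eq_norm]
    exact hK y hy x hx
  have h2 : |y - x| ^ α ≤ ((ε / (K + 1)) ^ (1/α)) ^ α := by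
    apply Real.rpow_le_rpow (abs_nonneg _) _ hα0.le
    rw [← Real.dist_eq]; exact hyd.le
  have h3 : ((ε / (K + 1)) ^ (1/α)) ^ α = ε / (K + 1) := by
    rw [← Real.rpow_mul (by positivity), one_div, inv_mul_cancel₀ hα0.ne', Real.rpow_one]
  rw [h3] at h2
  calc dist (f y) (f x) ≤ K * |y - x| ^ α := h1
    _ ≤ K * (ε / (K + 1)) := by
        exact mul_le_mul_of_nonneg_left h2 hK0
    _ < (K + 1) * (ε / (K + 1)) := by
        apply mul_lt_mul_of_pos_right (by linarith) (by positivity)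
    _ = ε := by field_simp

private lemma key_bound (α : ℝ) (hα0 : 0 < α) (z : ℂ) (hz : 0 < z.re)
    (f : ℝ → ℂ) (hf0 : f 0 = 0) (K : ℝ) (hK0 : 0 ≤ K)
    (hK : ∀ t ∈ Set.Icc (0 : ℝ) 1, ∀ s ∈ Set.Icc (0 : ℝ) 1,
      ‖f t - f s‖ ≤ K * |t - s| ^ α)
    (hf : ContinuousOn f (Set.Icc 0 1))
    {s t : ℝ} (hs : s ∈ Set.Icc (0:ℝ) 1) (ht : t ∈ Set.Icc (0:ℝ) 1) (hst : s ≤ t) :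
    ‖(∫ u in (0:ℝ)..t, (((t - u : ℝ)) : ℂ) ^ (z - 1) * f u)
      - ∫ u in (0:ℝ)..s, (((s - u : ℝ)) : ℂ) ^ (z - 1) * f u‖
      ≤ 2 / z.re * (K * (t - s) ^ α) := by
  obtain ⟨hs0, hs1⟩ := hs
  obtain ⟨ht0, ht1⟩ := ht
  have hc : (-1:ℝ) < (z - 1).re := by simp [Complex.sub_re]; linarith
  have hcr : (-1:ℝ) < z.re - 1 := by linarith
  -- substitution
  have subst : ∀ b : ℝ, 0 ≤ b →
      (∫ u in (0:ℝ)..b, (((b - u : ℝ)) : ℂ) ^ (z - 1) * f u)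
        = ∫ r in (0:ℝ)..b, ((r : ℝ) : ℂ) ^ (z - 1) * f (b - r) := by
    intro b hb
    have := intervalIntegral.integral_comp_sub_left
      (fun r : ℝ => ((r : ℝ) : ℂ) ^ (z - 1) * f (b - r)) b (a := 0) (b := b)
    simp only [sub_self, sub_zero, sub_sub_cancel] at this
    exact this
  rw [subst t ht0, subst s hs0]
  set Gt : ℝ → ℂ := fun r => ((r : ℝ) : ℂ) ^ (z - 1) * f (t - r) with hGt
  set Gs : ℝ → ℂ := fun r => ((r : ℝ) : ℂ) ^ (z - 1) * f (s - r) with hGs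
  -- integrability
  have cpowInt : ∀ a b : ℝ, IntervalIntegrable (fun r : ℝ => ((r:ℝ):ℂ) ^ (z - 1)) volume a b :=
    fun a b => intervalIntegral.intervalIntegrable_cpow' hc
  have contOn : ∀ b : ℝ, 0 ≤ b → b ≤ 1 → ∀ a₁ a₂ : ℝ, 0 ≤ a₁ → a₁ ≤ a₂ → a₂ ≤ b →
      ContinuousOn (fun r => f (b - r)) (Set.uIcc a₁ a₂) := by
    intro b hb0 hb1 a₁ a₂ h1 h2 h3
    apply hf.comp (Continuous.continuousOn (by continuity))
    intro r hr
    rw [Set.uIcc_of_le h2] at hr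
    obtain ⟨hr1, hr2⟩ := hr
    exact ⟨by linarith, by linarith⟩
  have intT0s : IntervalIntegrable Gt volume 0 s :=
    (cpowInt 0 s).mul_continuousOn (contOn t ht0 ht1 0 s le_rfl hs0 hst)
  have intTst : IntervalIntegrable Gt volume s t :=
    (cpowInt s t).mul_continuousOn (contOn t ht0 ht1 s t hs0 hst le_rfl)
  have intS0s : IntervalIntegrable Gs volume 0 s :=
    (cpowInt 0 s).mul_continuousOn (contOn s hs0 hs1 0 s le_rfl hs0 le_rfl)
  -- split the difference
  have split : (∫ r in (0:ℝ)..t, Gt r) - (∫ r in (0:ℝ)..s, Gs r)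
      = (∫ r in (0:ℝ)..s, (Gt r - Gs r)) + ∫ r in s..t, Gt r := by
    rw [intervalIntegral.integral_sub intT0s intS0s,
      ← intervalIntegral.integral_add_adjacent_intervals intT0s intTst]
    ring
  rw [split]
  set C : ℝ := K * (t - s) ^ α with hC
  have hC0 : 0 ≤ C := by
    apply mul_nonneg hK0 (Real.rpow_nonneg (by linarith) _)
  have rpowInt : ∀ a b : ℝ, IntervalIntegrable (fun r : ℝ => r ^ (z.re - 1) * C) volume a b :=
    fun a b => (intervalIntegral.intervalIntegrable_rpow' hcr).mul_const C
  have normcpow : ∀ r : ℝ, 0 < r → ‖((r:ℝ):ℂ) ^ (z - 1)‖ = r ^ (z.re - 1) := by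
    intro r hr
    rw [Complex.norm_cpow_eq_rpow_re_of_pos hr]
    norm_num
  -- bound A
  have boundA : ‖∫ r in (0:ℝ)..s, (Gt r - Gs r)‖ ≤ |∫ r in (0:ℝ)..s, r ^ (z.re - 1) * C| := by
    apply intervalIntegral.norm_integral_le_abs_of_norm_le _ (rpowInt 0 s)
    rw [Set.uIoc_of_le hs0]
    filter_upwards [ae_restrict_mem measurableSet_Ioc] with r hr
    obtain ⟨hr0, hrs⟩ := hr
    have : Gt r - Gs r = ((r:ℝ):ℂ) ^ (z - 1) * (f (t - r) - f (s - r)) := by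
      simp only [hGt, hGs]; ring
    rw [this, norm_mul, normcpow r hr0]
    apply mul_le_mul_of_nonneg_left _ (Real.rpow_nonneg hr0.le _)
    have := hK (t - r) ⟨by linarith, by linarith⟩ (s - r) ⟨by linarith, by linarith⟩
    calc ‖f (t - r) - f (s - r)‖ ≤ K * |t - r - (s - r)| ^ α := this
      _ = C := by rw [hC]; congr 2; rw [abs_of_nonneg (by linarith)]; ring_nf
  -- bound B
  have boundB : ‖∫ r in s..t, Gt r‖ ≤ |∫ r in s..t, r ^ (z.re - 1) * C| := by
    apply intervalIntegral.norm_integral_le_abs_of_norm_le _ (rpowInt s t)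
    rw [Set.uIoc_of_le hst]
    filter_upwards [ae_restrict_mem measurableSet_Ioc] with r hr
    obtain ⟨hrs, hrt⟩ := hr
    have hr0 : 0 < r := lt_of_le_of_lt hs0 hrs
    rw [hGt]
    simp only
    rw [norm_mul, normcpow r hr0]
    apply mul_le_mul_of_nonneg_left _ (Real.rpow_nonneg hr0.le _)
    have h1 := hK (t - r) ⟨by linarith, by linarith⟩ 0 ⟨le_rfl, by norm_num⟩
    rw [hf0, sub_zero, sub_zero, abs_of_nonneg (by linarith : (0:ℝ) ≤ t - r)] at h1
    calc ‖f (t - r)‖ ≤ K * (t - r) ^ α := h1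
      _ ≤ C := by
          rw [hC]
          apply mul_le_mul_of_nonneg_left _ hK0
          exact Real.rpow_le_rpow (by linarith) (by linarith) hα0.le
  -- compute integrals of the bound
  have hzne : z.re ≠ 0 := hz.ne'
  have intval : ∀ a b : ℝ, 0 ≤ a → a ≤ b →
      (∫ r in a..b, r ^ (z.re - 1) * C) = (b ^ z.re - a ^ z.re) / z.re * C := by
    intro a b _ _
    rw [intervalIntegral.integral_mul_const, integral_rpow (Or.inl hcr)]
    norm_num
  have valA : |∫ r in (0:ℝ)..s, r ^ (z.re - 1) * C| ≤ 1 / z.re * C := by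
    rw [intval 0 s le_rfl hs0, Real.zero_rpow hzne, sub_zero]
    have hs' : (0:ℝ) ≤ s ^ z.re := Real.rpow_nonneg hs0 _
    rw [abs_of_nonneg (by positivity)]
    have h1 : s ^ z.re ≤ 1 := Real.rpow_le_one hs0 hs1 hz.le
    apply mul_le_mul_of_nonneg_right _ hC0
    gcongr
  have valB : |∫ r in s..t, r ^ (z.re - 1) * C| ≤ 1 / z.re * C := by
    rw [intval s t hs0 hst]
    have hmono : s ^ z.re ≤ t ^ z.re := Real.rpow_le_rpow hs0 hst hz.le
    have h1 : t ^ z.re ≤ 1 := Real.rpow_le_one ht0 ht1 hz.le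
    have h2 : 0 ≤ s ^ z.re := Real.rpow_nonneg hs0 _
    rw [abs_of_nonneg (mul_nonneg (div_nonneg (by linarith) hz.le) hC0)]
    apply mul_le_mul_of_nonneg_right _ hC0
    gcongr
    linarith
  calc ‖(∫ r in (0:ℝ)..s, (Gt r - Gs r)) + ∫ r in s..t, Gt r‖
      ≤ ‖∫ r in (0:ℝ)..s, (Gt r - Gs r)‖ + ‖∫ r in s..t, Gt r‖ := norm_add_le _ _
    _ ≤ 1 / z.re * C + 1 / z.re * C := by
        exact add_le_add (boundA.trans valA) (boundB.trans valB)
    _ = 2 / z.re * C := by ring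

/-- Hölder seminorm bound for the Riemann–Liouville operator on `Lip_0^α[0,1]`:
`‖J(z)f‖_α ≤ (2/(|Γ(z)|·Re z))·‖f‖_α`. -/
theorem stmt_12 (α : ℝ) (hα0 : 0 < α) (hα1 : α < 1) (z : ℂ) (hz : 0 < z.re)
    (f : ℝ → ℂ) (hf0 : f 0 = 0) (K : ℝ)
    (hK : ∀ t ∈ Set.Icc (0 : ℝ) 1, ∀ s ∈ Set.Icc (0 : ℝ) 1,
      ‖f t - f s‖ ≤ K * |t - s| ^ α)
    (J : ℂ → (ℝ → ℂ) → ℝ → ℂ)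
    (hJ : J = fun γ g t =>
      (1 / Complex.Gamma γ) * ∫ s in (0 : ℝ)..t, (((t - s : ℝ)) : ℂ) ^ (γ - 1) * g s) :
    ∀ t ∈ Set.Icc (0 : ℝ) 1, ∀ s ∈ Set.Icc (0 : ℝ) 1,
      ‖J z f t - J z f s‖
        ≤ (2 / (‖Complex.Gamma z‖ * z.re)) * K * |t - s| ^ α := by
  have hK0 : 0 ≤ K := by
    have h := hK 1 (by norm_num) 0 (by norm_num)
    have h2 : |(1:ℝ) - 0| ^ α = 1 := by norm_num
    rw [h2, mul_one] at h
    exact le_trans (norm_nonneg _) h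
  have hf := holder_contOn hα0 hK hK0
  have hΓ : Complex.Gamma z ≠ 0 := by
    apply Complex.Gamma_ne_zero
    intro m hm
    rw [hm] at hz
    simp only [Complex.neg_re, Complex.natCast_re] at hz
    have : (0:ℝ) ≤ (m:ℝ) := Nat.cast_nonneg m
    linarith
  have hΓpos : 0 < ‖Complex.Gamma z‖ := norm_pos_iff.mpr hΓ
  subst hJ
  simp only
  have main : ∀ a ∈ Set.Icc (0:ℝ) 1, ∀ b ∈ Set.Icc (0:ℝ) 1, b ≤ a →
      ‖(1 / Complex.Gamma z) * (∫ u in (0:ℝ)..a, (((a - u : ℝ)) : ℂ) ^ (z - 1) * f u)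
        - (1 / Complex.Gamma z) * (∫ u in (0:ℝ)..b, (((b - u : ℝ)) : ℂ) ^ (z - 1) * f u)‖
        ≤ (2 / (‖Complex.Gamma z‖ * z.re)) * K * |a - b| ^ α := by
    intro a ha b hb hba
    have key := key_bound α hα0 z hz f hf0 K hK0 hK hf hb ha hba
    set Ia := ∫ u in (0:ℝ)..a, (((a - u : ℝ)) : ℂ) ^ (z - 1) * f u with hIa
    set Ib := ∫ u in (0:ℝ)..b, (((b - u : ℝ)) : ℂ) ^ (z - 1) * f u with hIb
    have heq : (1 / Complex.Gamma z) * Ia - (1 / Complex.Gamma z) * Ib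
        = (1 / Complex.Gamma z) * (Ia - Ib) := by ring
    rw [heq, norm_mul, norm_div, norm_one,
      abs_of_nonneg (by linarith : (0:ℝ) ≤ a - b)]
    calc (1 / ‖Complex.Gamma z‖) * ‖Ia - Ib‖
        ≤ (1 / ‖Complex.Gamma z‖) * (2 / z.re * (K * (a - b) ^ α)) := by
          apply mul_le_mul_of_nonneg_left _ (by positivity)
          exact key
      _ = 2 / (‖Complex.Gamma z‖ * z.re) * K * (a - b) ^ α := by
          field_simp
  intro t ht s hs
  rcases le_total s t with h | h
  · exact main t ht s hs h
  · have h2 := main s hs t ht h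
    rw [abs_sub_comm s t] at h2
    calc ‖_‖ = ‖_‖ := norm_sub_rev _ _
      _ ≤ _ := h2
end

section
/- Let E = ℓ²(ℕ) and for z ∈ ℂ with |arg z| < π/4 define T(z)(xₙ) = (exp((-n + in + i·log(n+1))·z)·xₙ)ₙ. For the lower boundary values z = t·e^(-iπ/4), t ≥ 0, one has ‖T(t e^(-iπ/4))(xₙ)‖² = Σₙ (n+1)^(2t/√2) |xₙ|², whenever this sum is finite; in particular T(t e^(-iπ/4)) is an unbounded operator on ℓ²(ℕ) for every t > 0. -/
open scoped ENNReal

/-- Lower boundary values `z = t e^(-iπ/4)` of the diagonal semigroup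
`T(z)(xₙ) = (exp((-n+in+i log(n+1))z) xₙ)` on `ℓ²(ℕ)`: the norm identity
`‖T(te^(-iπ/4))x‖² = Σ (n+1)^(2t/√2)|xₙ|²`, and unboundedness for `t > 0`. -/
theorem stmt_14 (t : ℝ) (ht : 0 ≤ t) :
    (∀ x : ℕ → ℂ,
      ∑' n : ℕ, ENNReal.ofReal
          (
            ‖Complex.exp ((-(n : ℂ) + (n : ℂ) * Complex.I +
                (Real.log ((n : ℝ) + 1) : ℂ) * Complex.I) *
              ((t : ℂ) * Complex.exp (-((Real.pi / 4 : ℝ) : ℂ) * Complex.I))) * x n‖ ^ 2)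
        = ∑' n : ℕ, ENNReal.ofReal
            (((n : ℝ) + 1) ^ (2 * t / Real.sqrt 2) * ‖x n‖ ^ 2)) ∧
    (0 < t → ¬ ∃ C : ℝ≥0∞, C ≠ ⊤ ∧ ∀ x : ℕ → ℂ,
      ∑' n : ℕ, ENNReal.ofReal
          (((n : ℝ) + 1) ^ (2 * t / Real.sqrt 2) * ‖x n‖ ^ 2)
        ≤ C * ∑' n : ℕ, ENNReal.ofReal (‖x n‖ ^ 2)) := by
  have key : ∀ n : ℕ,
      ‖Complex.exp ((-(n : ℂ) + (n : ℂ) * Complex.I +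
          (Real.log ((n : ℝ) + 1) : ℂ) * Complex.I) *
        ((t : ℂ) * Complex.exp (-((Real.pi / 4 : ℝ) : ℂ) * Complex.I)))‖
        = ((n : ℝ) + 1) ^ (t / Real.sqrt 2) := by
    intro n
    rw [Complex.norm_exp]
    have h1 : (-((Real.pi / 4 : ℝ) : ℂ)) = ((-(Real.pi / 4) : ℝ) : ℂ) := by push_cast; ring
    have hre : (Complex.exp (((-(Real.pi / 4) : ℝ) : ℂ) * Complex.I)).re
        = Real.cos (-(Real.pi / 4)) := Complex.exp_ofReal_mul_I_re _
    have him : (Complex.exp (((-(Real.pi / 4) : ℝ) : ℂ) * Complex.I)).im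
        = Real.sin (-(Real.pi / 4)) := Complex.exp_ofReal_mul_I_im _
    rw [h1]
    have hc : Real.cos (-(Real.pi / 4)) = Real.sqrt 2 / 2 := by
      rw [Real.cos_neg, Real.cos_pi_div_four]
    have hs : Real.sin (-(Real.pi / 4)) = -(Real.sqrt 2 / 2) := by
      rw [Real.sin_neg, Real.sin_pi_div_four]
    have hre2 : ((-(n : ℂ) + (n : ℂ) * Complex.I +
          (Real.log ((n : ℝ) + 1) : ℂ) * Complex.I) *
        ((t : ℂ) * Complex.exp (((-(Real.pi / 4) : ℝ) : ℂ) * Complex.I))).re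
        = t * Real.log ((n : ℝ) + 1) / Real.sqrt 2 := by
      have h2 : Real.sqrt 2 ≠ 0 := by positivity
      have h22 : Real.sqrt 2 * Real.sqrt 2 = 2 := Real.mul_self_sqrt (by norm_num)
      simp only [Complex.mul_re, Complex.mul_im, Complex.add_re, Complex.add_im,
        Complex.neg_re, Complex.neg_im, Complex.natCast_re, Complex.natCast_im,
        Complex.ofReal_re, Complex.ofReal_im, Complex.I_re, Complex.I_im, hre, him, hc, hs]
      field_simp
      linear_combination (t * Real.log ((n:ℝ) + 1)) * h22
    rw [hre2]
    rw [Real.rpow_def_of_pos (by positivity)]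
    ring_nf
  have keysq : ∀ (n : ℕ) (x : ℂ),
      ‖Complex.exp ((-(n : ℂ) + (n : ℂ) * Complex.I +
          (Real.log ((n : ℝ) + 1) : ℂ) * Complex.I) *
        ((t : ℂ) * Complex.exp (-((Real.pi / 4 : ℝ) : ℂ) * Complex.I))) * x‖ ^ 2
        = ((n : ℝ) + 1) ^ (2 * t / Real.sqrt 2) * ‖x‖ ^ 2 := by
    intro n x
    rw [norm_mul, key, mul_pow, ← Real.rpow_natCast (((n:ℝ)+1) ^ (t / Real.sqrt 2)) 2,
      ← Real.rpow_mul (by positivity),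
      show t / Real.sqrt 2 * ((2:ℕ):ℝ) = 2 * t / Real.sqrt 2 by push_cast; ring]
  constructor
  · intro x
    exact tsum_congr fun n => by rw [keysq]
  · intro htpos
    rintro ⟨C, hC, hbd⟩
    set a := 2 * t / Real.sqrt 2 with ha
    have hapos : 0 < a := by positivity
    obtain ⟨N, hN⟩ : ∃ N : ℕ, C.toReal < ((N : ℝ) + 1) ^ a := by
      have := (tendsto_rpow_atTop hapos).comp
        (Filter.tendsto_atTop_add_const_right Filter.atTop 1 tendsto_natCast_atTop_atTop)
      obtain ⟨N, hN⟩ := (this.eventually_gt_atTop C.toReal).exists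
      exact ⟨N, hN⟩
    have hbd' := hbd (fun n => if n = N then 1 else 0)
    have hL : (∑' n : ℕ, ENNReal.ofReal
        (((n : ℝ) + 1) ^ a * ‖(fun n => if n = N then (1:ℂ) else 0) n‖ ^ 2))
        = ENNReal.ofReal (((N : ℝ) + 1) ^ a) := by
      rw [tsum_eq_single N]
      · simp
      · intro n hn; simp [hn]
    have hR : (∑' n : ℕ, ENNReal.ofReal
        (‖(fun n => if n = N then (1:ℂ) else 0) n‖ ^ 2)) = 1 := by
      rw [tsum_eq_single N]
      · simp
      · intro n hn; simp [hn]
    rw [hL, hR, mul_one] at hbd'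
    have := (ENNReal.ofReal_le_iff_le_toReal hC).mp hbd'
    linarith
end
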